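/- Every 3-dynamic coloring of the wheel W_5 (with 5 spoke vertices and one hub) uses at least 6 colors; that is, the 3-dynamic chromatic number χ_3^d(W_5) ≥ 6. -/

import Mathlib

/-- The wheel `W n`: a cycle on `n` vertices (`some i`) together with a hub vertex (`none`)
adjacent to every cycle vertex. -/
def wheel (n : ℕ) : SimpleGraph (Option (Fin n)) :=
  SimpleGraph.fromRel (fun a b =>
    match a, b with
    | none, some _ => True
    | some i, some j => (j : ℕ) = ((i : ℕ) + 1) % n
    | _, _ => False)
/-- An `r`-dynamic coloring: a proper coloring such that each vertex `v` sees at least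
`min r (deg v)` distinct colors on its neighborhood. -/
def IsDynColoring {V : Type} (G : SimpleGraph V) (r : ℕ) (φ : V → ℕ) : Prop :=
  (∀ ⦃u v : V⦄, G.Adj u v → φ u ≠ φ v) ∧
  ∀ v : V, min r ((G.neighborSet v).ncard) ≤ (φ '' G.neighborSet v).ncard

lemma wheel_nbhd (i : Fin 5) :
    (wheel 5).neighborSet (some i) = {none, some (i+1), some (i-1)} := by
  ext x
  simp only [SimpleGraph.mem_neighborSet, wheel, SimpleGraph.fromRel_adj, Set.mem_insert_iff, Set.mem_singleton_iff]
  fin_cases i <;> fin_cases x <;> simp <;> decide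


/-- Every 3-dynamic coloring of the wheel `W 5` uses at least `6` colors; i.e.
`χ₃ᵈ(W 5) ≥ 6`. -/
theorem wheel_five_three_dynamic_ge_six (φ : Option (Fin 5) → ℕ)
    (hφ : IsDynColoring (wheel 5) 3 φ) :
    6 ≤ (Set.range φ).ncard := by
  obtain ⟨hp, hd⟩ := hφ
  have hadj : ∀ i : Fin 5, (wheel 5).Adj (some i) none ∧ (wheel 5).Adj (some i) (some (i+1)) := by
    intro i
    constructor
    · have : (none : Option (Fin 5)) ∈ (wheel 5).neighborSet (some i) := by
        rw [wheel_nbhd]; simp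
      exact this
    · have : (some (i+1) : Option (Fin 5)) ∈ (wheel 5).neighborSet (some i) := by
        rw [wheel_nbhd]; simp
      exact this
  have hH : ∀ i : Fin 5, φ (some i) ≠ φ none := fun i => hp (hadj i).1
  have hA : ∀ i : Fin 5, φ (some i) ≠ φ (some (i+1)) := fun i => hp (hadj i).2
  have hD : ∀ i : Fin 5, φ (some (i+1)) ≠ φ (some (i-1)) := by
    intro i heq
    have h2 := hd (some i)
    rw [wheel_nbhd] at h2
    rw [Set.image_insert_eq, Set.image_insert_eq, Set.image_singleton, heq] at h2
    have h3 : ({none, some (i+1), some (i-1)} : Set (Option (Fin 5))).ncard = 3 := by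
      rw [Set.ncard_insert_of_notMem (by simp) ((Set.finite_singleton _).insert _),
        Set.ncard_insert_of_notMem (by
          simp only [Set.mem_singleton_iff, Option.some.injEq]
          intro h
          have h5 : (i+1 : Fin 5) - (i - 1) = 0 := by rw [h]; exact (by decide : ∀ j : Fin 5, j - j = 0) _
          have h6 : (i+1 : Fin 5) - (i - 1) = 2 := (by decide : ∀ j : Fin 5, (j+1) - (j-1) = 2) i
          rw [h6] at h5
          exact absurd h5 (by decide)) (Set.finite_singleton _), Set.ncard_singleton]
    rw [h3] at h2
    simp only [min_self] at h2
    have h4 : ({φ none, φ (some (i-1)), φ (some (i-1))} : Set ℕ).ncard ≤ 2 := by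
      rw [show ({φ none, φ (some (i-1)), φ (some (i-1))} : Set ℕ)
          = {φ none, φ (some (i-1))} by simp]
      exact le_trans (Set.ncard_insert_le _ _) (by simp)
    omega
  have k0 : φ (some 0) ≠ φ (some 1) := hA 0
  have k1 : φ (some 1) ≠ φ (some 2) := hA 1
  have k2 : φ (some 2) ≠ φ (some 3) := hA 2
  have k3 : φ (some 3) ≠ φ (some 4) := hA 3
  have k4 : φ (some 4) ≠ φ (some 0) := hA 4
  have d0 : φ (some 1) ≠ φ (some 4) := hD 0
  have d1 : φ (some 2) ≠ φ (some 0) := hD 1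
  have d2 : φ (some 3) ≠ φ (some 1) := hD 2
  have d3 : φ (some 4) ≠ φ (some 2) := hD 3
  have d4 : φ (some 0) ≠ φ (some 3) := hD 4
  have hinj : Function.Injective φ := by
    intro a b hab
    match a, b with
    | none, none => rfl
    | none, some j => exact absurd hab.symm (hH j)
    | some i, none => exact absurd hab (hH i)
    | some i, some j =>
      congr
      by_contra hij
      fin_cases i <;> fin_cases j <;> simp_all
  have h6 : (Set.range φ).ncard = 6 := by
    rw [← Nat.card_coe_set_eq, Nat.card_range_of_injective hinj]
    simp
  omega
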